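/- Let s₁ be the real 4-dimensional Lie algebra with basis e₁, e₂, e₃, e₄ and nonzero brackets ⁅e₂, e₄⁆ = −e₁ and ⁅e₃, e₄⁆ = −e₃ (all other brackets of basis elements zero, extended bilinearly and antisymmetrically). A linear endomorphism D of s₁ is a derivation of s₁ if and only if there exist real numbers μ₁₁, μ₁₂, μ₃₃, μ₁₄, μ₂₄, μ₃₄ such that D e₁ = μ₁₁ e₁, D e₂ = μ₁₂ e₁ + μ₁₁ e₂, D e₃ = μ₃₃ e₃, and D e₄ = μ₁₄ e₁ + μ₂₄ e₂ + μ₃₄ e₃. -/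

import Mathlib

/-- Characterization of the derivations of the real 4-dimensional Lie algebra `s₁`
(Šnobl–Winternitz `s_{4,1}`), with basis `e₁ = b 0, …, e₄ = b 3` and nonzero brackets
`⁅e₂, e₄⁆ = -e₁`, `⁅e₃, e₄⁆ = -e₃`. -/
theorem stmt_9 {L : Type*} [LieRing L] [LieAlgebra ℝ L]
    (b : Module.Basis (Fin 4) ℝ L)
    (h12 : ⁅b 0, b 1⁆ = 0) (h13 : ⁅b 0, b 2⁆ = 0) (h14 : ⁅b 0, b 3⁆ = 0)
    (h23 : ⁅b 1, b 2⁆ = 0) (h24 : ⁅b 1, b 3⁆ = -b 0) (h34 : ⁅b 2, b 3⁆ = -b 2)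
    (D : L →ₗ[ℝ] L) :
    (∀ x y : L, D ⁅x, y⁆ = ⁅D x, y⁆ + ⁅x, D y⁆) ↔
      ∃ μ11 μ12 μ33 μ14 μ24 μ34 : ℝ,
        D (b 0) = μ11 • b 0 ∧
        D (b 1) = μ12 • b 0 + μ11 • b 1 ∧
        D (b 2) = μ33 • b 2 ∧
        D (b 3) = μ14 • b 0 + μ24 • b 1 + μ34 • b 2 := by
  have h21 : ⁅b 1, b 0⁆ = 0 := by rw [← lie_skew, h12]; simp
  have h31 : ⁅b 2, b 0⁆ = 0 := by rw [← lie_skew, h13]; simp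
  have h41 : ⁅b 3, b 0⁆ = 0 := by rw [← lie_skew, h14]; simp
  have h32 : ⁅b 2, b 1⁆ = 0 := by rw [← lie_skew, h23]; simp
  have h42 : ⁅b 3, b 1⁆ = b 0 := by rw [← lie_skew, h24]; simp
  have h43 : ⁅b 3, b 2⁆ = b 2 := by rw [← lie_skew, h34]; simp
  constructor
  · intro hD
    set a : Fin 4 → Fin 4 → ℝ := fun k j => b.repr (D (b k)) j with ha
    have hrep : ∀ k, D (b k) = a k 0 • b 0 + a k 1 • b 1 + a k 2 • b 2 + a k 3 • b 3 := by
      intro k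
      have := b.sum_repr (D (b k))
      rw [Fin.sum_univ_four] at this
      exact this.symm
    have key : ∀ i j m : Fin 4, b.repr (D ⁅b i, b j⁆) m
        = b.repr (⁅D (b i), b j⁆ + ⁅b i, D (b j)⁆) m := fun i j m => by rw [hD]
    have E01 := key 0 1 0
    have E03a := key 0 3 0
    have E03c := key 0 3 2
    have E12a := key 1 2 0
    have E12c := key 1 2 2
    have E23b := key 2 3 1
    have E23c := key 2 3 2
    have E23a := key 2 3 0
    have E13a := key 1 3 0
    have E13c := key 1 3 2
    simp only [hrep, h12, h13, h14, h23, h24, h34, h21, h31, h41, h32, h42, h43,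
      lie_add, add_lie, lie_smul, smul_lie, lie_self, lie_zero, zero_lie, smul_zero,
      smul_neg, map_zero, map_neg, map_add, map_smul, Module.Basis.repr_self,
      Finsupp.smul_single, Finsupp.coe_add, Finsupp.coe_neg, Finsupp.coe_smul,
      Pi.add_apply, Pi.neg_apply, Pi.smul_apply, Finsupp.single_apply, smul_eq_mul,
      add_zero, zero_add, mul_one, mul_zero, neg_zero, neg_neg]
      at E01 E03a E03c E12a E12c E23b E23c E23a E13a E13c
    simp only [Fin.reduceEq, if_true, if_false, Finsupp.coe_zero, Pi.zero_apply,
      neg_zero, add_zero, zero_add, neg_neg, neg_eq_zero, neg_inj, neg_add_rev]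
      at E01 E03a E03c E12a E12c E23b E23c E23a E13a E13c
    have z01 : a 0 1 = 0 := by linarith
    have z02 : a 0 2 = 0 := by linarith
    have z03 : a 0 3 = 0 := by linarith
    have z12 : a 1 2 = 0 := by linarith
    have z13 : a 1 3 = 0 := by linarith
    have z20 : a 2 0 = 0 := by linarith
    have z21 : a 2 1 = 0 := by linarith
    have z23 : a 2 3 = 0 := by linarith
    have z33 : a 3 3 = 0 := by linarith
    have ha11 : a 1 1 = a 0 0 := by linarith
    refine ⟨a 0 0, a 1 0, a 2 2, a 3 0, a 3 1, a 3 2, ?_, ?_, ?_, ?_⟩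
    · rw [hrep 0, z01, z02, z03]; simp
    · rw [hrep 1, ha11, z12, z13]; simp
    · rw [hrep 2, z20, z21, z23]; simp
    · rw [hrep 3, z33]; simp
  · rintro ⟨μ11, μ12, μ33, μ14, μ24, μ34, hd0, hd1, hd2, hd3⟩
    have key : ∀ i j : Fin 4, D ⁅b i, b j⁆ = ⁅D (b i), b j⁆ + ⁅b i, D (b j)⁆ := by
      intro i j
      fin_cases i <;> fin_cases j <;>
        simp [hd0, hd1, hd2, hd3, h12, h13, h14, h23, h24, h34,
          h21, h31, h41, h32, h42, h43, lie_add, add_lie, lie_smul, smul_lie,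
          smul_neg, map_add, map_smul, map_neg] <;> abel
    intro x y
    letI : LieRing (Module.End ℝ L) := LieRing.ofAssociativeRing
    let F1 : L →ₗ[ℝ] L →ₗ[ℝ] L :=
      (LinearMap.llcomp ℝ L L L D).comp (LieAlgebra.ad ℝ L).toLinearMap
    let F2 : L →ₗ[ℝ] L →ₗ[ℝ] L := (LieAlgebra.ad ℝ L).toLinearMap.comp D
    let F3 : L →ₗ[ℝ] L →ₗ[ℝ] L :=
      (LinearMap.lcomp ℝ L D).comp (LieAlgebra.ad ℝ L).toLinearMap
    have hF : F1 = F2 + F3 := by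
      apply b.ext; intro i
      apply b.ext; intro j
      simpa [F1, F2, F3, LieAlgebra.ad_apply] using key i j
    have h := congrArg (fun f : L →ₗ[ℝ] L →ₗ[ℝ] L => f x y) hF
    simpa [F1, F2, F3, LieAlgebra.ad_apply] using h
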